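/- For every P in R_J (a real trigonometric polynomial of degree at most 2J with values in [0,1]), there exists a positive semidefinite (2J+1)×(2J+1) matrix E_+ such that P(θ) = ⟨ψ| U_θ† E_+ U_θ |ψ⟩ for all θ, where |ψ⟩ = (2J+1)^{-1/2} Σ_{j=-J}^{J} |j⟩ and U_θ|j⟩ = e^{ijθ}|j⟩. Moreover, E_+ can be chosen of rank one: E_+ = (2J+1)|b⟩⟨b| for some vector |b⟩. -/

import Mathlib

open Matrix Real Complex Finset
open scoped ComplexOrder

/-- `p` is a real trigonometric polynomial of degree at most `N`. -/
def IsTrigPolyDeg (N : ℕ) (p : ℝ → ℝ) : Prop :=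
  ∃ a b : ℕ → ℝ, ∀ θ : ℝ,
    p θ = a 0 + ∑ k ∈ Finset.Icc 1 N,
      (a k * Real.cos ((k : ℝ) * θ) + b k * Real.sin ((k : ℝ) * θ))

/-- The diagonal unitary `U_θ` on `ℂ^{N+1}` with `U_θ |j⟩ = e^{ijθ} |j⟩`, where the basis
vector of index `k : Fin (N+1)` corresponds to `j = k - N/2 ∈ {-J, …, J}` (with `N = 2J`). -/
noncomputable def Urot (N : ℕ) (θ : ℝ) : Matrix (Fin (N + 1)) (Fin (N + 1)) ℂ :=
  Matrix.diagonal fun k => Complex.exp (Complex.I * (((k : ℝ) - (N : ℝ) / 2 : ℝ) : ℂ) * (θ : ℂ))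

/-- The uniform superposition `|ψ⟩ = (2J+1)^{-1/2} Σ_j |j⟩` on `ℂ^{N+1}`, `N = 2J`. -/
noncomputable def psiUnif (N : ℕ) : Fin (N + 1) → ℂ :=
  fun _ => ((1 / Real.sqrt (N + 1) : ℝ) : ℂ)



namespace FR4
open Polynomial


lemma eval_map_conj (p : Polynomial ℂ) (z : ℂ) :
    (p.map (starRingEnd ℂ)).eval z = (starRingEnd ℂ) (p.eval ((starRingEnd ℂ) z)) := by
  conv_lhs => rw [show z = (starRingEnd ℂ) ((starRingEnd ℂ) z) by simp]
  rw [eval_map]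
  exact eval₂_hom (starRingEnd ℂ) ((starRingEnd ℂ) z)

lemma eval_reflect (n : ℕ) (p : Polynomial ℂ) (hp : p.natDegree ≤ n) {z : ℂ} (hz : z ≠ 0) :
    (reflect n p).eval z = z ^ n * p.eval z⁻¹ := by
  have hzi : z⁻¹ ≠ 0 := inv_ne_zero hz
  letI : Invertible (z⁻¹ : ℂ) := invertibleOfNonzero hzi
  have h := Polynomial.eval₂_reflect_mul_pow (RingHom.id ℂ) (z⁻¹) n p hp
  rw [invOf_eq_inv, inv_inv] at h
  rw [eval₂_eq_eval_map, eval₂_eq_eval_map, Polynomial.map_id] at h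
  rw [Polynomial.map_id] at h
  rw [← h]
  rw [inv_pow, mul_comm, mul_assoc, inv_mul_cancel₀ (pow_ne_zero n hz), mul_one]

lemma reflect_one_linear (c : ℂ) : reflect 1 (X - C c : Polynomial ℂ) = 1 - C c * X := by
  ext n
  rcases n with _ | _ | n
  · simp
  · simp
  · rw [coeff_reflect, revAt_eq_self_of_lt (by omega)]
    simp [coeff_X, coeff_one]

lemma exp_real_inj {x y : ℝ} (h : Complex.exp ((x:ℝ) * I) = Complex.exp ((y:ℝ) * I)) :
    ∃ k : ℤ, x = y + k * (2 * Real.pi) := by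
  rw [Complex.exp_eq_exp_iff_exists_int] at h
  obtain ⟨k, hk⟩ := h
  refine ⟨k, ?_⟩
  have hc : (x:ℂ) = (y:ℂ) + (k:ℂ) * (2*(Real.pi:ℂ)) := by
    have h' : (x:ℂ) * I = ((y:ℂ) + (k:ℂ) * (2*(Real.pi:ℂ))) * I := by linear_combination hk
    exact mul_right_cancel₀ Complex.I_ne_zero h'
  exact_mod_cast hc

lemma exp_ne_of_small {θ a : ℝ} (h0 : 0 < a) (h1 : a ≤ 1) :
    Complex.exp (((θ + a : ℝ)) * I) ≠ Complex.exp ((θ:ℝ) * I) := by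
  intro h
  obtain ⟨k, hk⟩ := exp_real_inj h
  have hpi := Real.pi_gt_three
  rcases lt_trichotomy k 0 with hlt | heq | hgt
  · have : (k : ℝ) ≤ -1 := by exact_mod_cast (by omega : k ≤ -1)
    nlinarith
  · rw [heq] at hk; simp at hk; linarith
  · have : (1 : ℝ) ≤ (k : ℝ) := by exact_mod_cast hgt
    nlinarith

lemma self_inversive {N : ℕ} {L : Polynomial ℂ} (hdeg : L.natDegree ≤ 2 * N)
    (hreal : ∀ θ : ℝ, ∃ r : ℝ, L.eval (Complex.exp (θ * I)) = (r : ℂ) * Complex.exp ((N : ℂ) * θ * I)) :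
    L = reflect (2 * N) (L.map (starRingEnd ℂ)) := by
  set D := L - reflect (2 * N) (L.map (starRingEnd ℂ)) with hD
  have key : ∀ θ : ℝ, D.eval (Complex.exp (θ * I)) = 0 := by
    intro θ
    obtain ⟨r, hr⟩ := hreal θ
    have hz : Complex.exp ((θ:ℝ) * I) ≠ 0 := Complex.exp_ne_zero _
    have hinv : (Complex.exp ((θ:ℝ) * I))⁻¹ = Complex.exp (-(θ:ℂ) * I) := by
      rw [← Complex.exp_neg]; ring_nf
    have hconjz : (starRingEnd ℂ) (Complex.exp (-(θ:ℂ) * I)) = Complex.exp ((θ:ℝ) * I) := by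
      rw [← Complex.exp_conj]; congr 1; simp
    rw [hD, eval_sub, eval_reflect (2*N) _ ((natDegree_map_le).trans hdeg) hz,
      hinv, eval_map_conj, hconjz, hr]
    rw [_root_.map_mul, Complex.conj_ofReal]
    have h2N : Complex.exp ((θ:ℝ) * I) ^ (2*N) = Complex.exp (((2*N : ℕ) : ℂ) * (θ:ℝ) * I) := by
      rw [← Complex.exp_nat_mul]; congr 1; ring
    have hconj2 : (starRingEnd ℂ) (Complex.exp ((N:ℂ) * (θ:ℝ) * I)) =
        Complex.exp (-((N:ℂ) * (θ:ℝ) * I)) := by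
      rw [← Complex.exp_conj]; congr 1
      rw [_root_.map_mul, _root_.map_mul, Complex.conj_ofReal, Complex.conj_I, Complex.conj_natCast]
      ring
    rw [h2N, hconj2]
    have hmul : Complex.exp (((2*N : ℕ) : ℂ) * (θ:ℝ) * I) * Complex.exp (-((N:ℂ) * (θ:ℝ) * I))
        = Complex.exp ((N:ℂ) * (θ:ℝ) * I) := by
      rw [← Complex.exp_add]; congr 1; push_cast; ring
    linear_combination (-(r : ℂ)) * hmul
  have hsub : ((fun θ : ℝ => Complex.exp (θ * I)) '' (Set.Ioo 0 1)) ⊆ {x | D.IsRoot x} := by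
    rintro _ ⟨θ, _, rfl⟩
    exact key θ
  have hinj : Set.InjOn (fun θ : ℝ => Complex.exp (θ * I)) (Set.Ioo 0 1) := by
    intro x hx y hy hxy
    obtain ⟨k, hk⟩ := exp_real_inj hxy
    have hpi := Real.pi_gt_three
    have hk0 : k = 0 := by
      rcases lt_trichotomy k 0 with h | h | h
      · have : (k : ℝ) ≤ -1 := by exact_mod_cast (by omega : k ≤ -1)
        nlinarith [hx.1, hx.2, hy.1, hy.2]
      · exact h
      · have : (1 : ℝ) ≤ (k : ℝ) := by exact_mod_cast h
        nlinarith [hx.1, hx.2, hy.1, hy.2]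
    rw [hk0] at hk
    simpa using hk
  have hinf : Set.Infinite {x | D.IsRoot x} :=
    Set.Infinite.mono hsub (Set.Infinite.image hinj (Set.Ioo_infinite (by norm_num)))
  have hD0 : D = 0 := Polynomial.eq_zero_of_infinite_isRoot D hinf
  exact sub_eq_zero.mp (hD ▸ hD0)

lemma deriv_zero_of_circle_root {N : ℕ} {L : Polynomial ℂ}
    (hpos : ∀ θ : ℝ, ∃ r : ℝ, 0 ≤ r ∧ L.eval (Complex.exp (θ * I)) = (r:ℂ) * Complex.exp ((N:ℂ) * θ * I))
    {θ₀ : ℝ} (h0 : L.eval (Complex.exp (θ₀ * I)) = 0) :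
    L.derivative.eval (Complex.exp (θ₀ * I)) = 0 := by
  choose r hr hval using hpos
  set z₀ : ℂ := Complex.exp ((θ₀:ℝ) * I) with hz₀
  set ψ : ℝ → ℂ := fun θ => L.eval (Complex.exp ((θ:ℝ) * I)) * Complex.exp ((θ:ℂ) * (-(N:ℂ) * I)) with hψdef
  have hψ : ∀ θ : ℝ, ψ θ = ((r θ : ℝ) : ℂ) := by
    intro θ
    rw [hψdef]
    simp only
    rw [hval θ, mul_assoc, ← Complex.exp_add]
    have : (N:ℂ) * (θ:ℝ) * I + (θ:ℂ) * (-(N:ℂ) * I) = 0 := by ring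
    rw [this, Complex.exp_zero, mul_one]
  have h1 : HasDerivAt (fun θ : ℝ => ((θ : ℝ) : ℂ)) 1 θ₀ := by
    simpa using (hasDerivAt_id θ₀).ofReal_comp
  have hin1 : HasDerivAt (fun θ : ℝ => ((θ:ℝ):ℂ) * I) I θ₀ := by
    simpa using h1.mul_const I
  have hexp1 : HasDerivAt (fun θ : ℝ => Complex.exp (((θ:ℝ):ℂ) * I)) (z₀ * I) θ₀ := by
    simpa using hin1.cexp
  have hpoly : HasDerivAt (fun z : ℂ => L.eval z) (L.derivative.eval z₀) z₀ := L.hasDerivAt z₀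
  have hcomp : HasDerivAt (fun θ : ℝ => L.eval (Complex.exp (((θ:ℝ):ℂ) * I)))
      (L.derivative.eval z₀ * (z₀ * I)) θ₀ := by have := hpoly.comp θ₀ hexp1; exact this
  have hin2 : HasDerivAt (fun θ : ℝ => ((θ:ℝ):ℂ) * (-(N:ℂ) * I)) (-(N:ℂ) * I) θ₀ := by
    simpa using h1.mul_const (-(N:ℂ) * I)
  have hexp2 : HasDerivAt (fun θ : ℝ => Complex.exp (((θ:ℝ):ℂ) * (-(N:ℂ) * I)))
      (Complex.exp (((θ₀:ℝ):ℂ) * (-(N:ℂ) * I)) * (-(N:ℂ) * I)) θ₀ := hin2.cexp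
  set D : ℂ := L.derivative.eval z₀ * (z₀ * I) * Complex.exp (((θ₀:ℝ):ℂ) * (-(N:ℂ) * I)) +
      L.eval (Complex.exp (((θ₀:ℝ):ℂ) * I)) * (Complex.exp (((θ₀:ℝ):ℂ) * (-(N:ℂ) * I)) * (-(N:ℂ) * I)) with hDdef
  have hψder : HasDerivAt ψ D θ₀ := hcomp.mul hexp2
  have hre : HasDerivAt r D.re θ₀ := by
    have := (Complex.reCLM.hasFDerivAt.comp_hasDerivAt θ₀ hψder)
    have heq : (⇑Complex.reCLM ∘ ψ) = r := by
      funext θ; simp [Function.comp, hψ θ]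
    rw [heq] at this
    simpa using this
  have him : HasDerivAt (fun θ : ℝ => (ψ θ).im) D.im θ₀ := by
    have := (Complex.imCLM.hasFDerivAt.comp_hasDerivAt θ₀ hψder)
    exact this
  have hrmin : IsLocalMin r θ₀ := by
    have hr0 : r θ₀ = 0 := by
      have h2 := hψ θ₀
      rw [hψdef] at h2
      simp only at h2
      rw [h0] at h2
      simp at h2
      exact_mod_cast h2.symm
    apply Filter.Eventually.of_forall
    intro x
    rw [hr0]
    exact hr x
  have hDre : D.re = 0 := by
    have h3 := hrmin.deriv_eq_zero
    rw [hre.deriv] at h3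
    exact h3
  have hDim : D.im = 0 := by
    have hconst : (fun θ : ℝ => (ψ θ).im) = fun _ => (0:ℝ) := by
      funext θ; rw [hψ θ]; simp
    rw [hconst] at him
    exact him.unique (hasDerivAt_const θ₀ 0)
  have hD0 : D = 0 := Complex.ext hDre hDim
  rw [hDdef] at hD0
  rw [← hz₀] at hD0
  rw [h0] at hD0
  simp only [zero_mul, add_zero] at hD0
  have hz0ne : z₀ ≠ 0 := Complex.exp_ne_zero _
  have hexpne : Complex.exp (((θ₀:ℝ):ℂ) * (-(N:ℂ) * I)) ≠ 0 := Complex.exp_ne_zero _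
  rcases mul_eq_zero.mp hD0 with h | h
  · rcases mul_eq_zero.mp h with h' | h'
    · exact h'
    · exact absurd h' (by simp [hz0ne, Complex.I_ne_zero])
  · exact absurd h hexpne

lemma sq_dvd_of_root_of_deriv {L : Polynomial ℂ} {w : ℂ} (h0 : L.eval w = 0)
    (h1 : L.derivative.eval w = 0) : (X - C w) * (X - C w) ∣ L := by
  obtain ⟨K, hK⟩ := (dvd_iff_isRoot.mpr h0)
  have hKw : K.eval w = 0 := by
    have hd := congrArg derivative hK
    rw [derivative_mul, derivative_sub, derivative_X, derivative_C] at hd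
    have h2 := congrArg (eval w) hd
    rw [h1] at h2
    simp at h2
    exact h2.symm
  obtain ⟨K₂, hK₂⟩ := dvd_iff_isRoot.mpr hKw
  exact ⟨K₂, by rw [hK, hK₂]; ring⟩


lemma fejer_riesz : ∀ (n N : ℕ) (L : Polynomial ℂ), L.natDegree ≤ n → L.natDegree ≤ 2 * N →
    (∀ θ : ℝ, ∃ r : ℝ, 0 ≤ r ∧ L.eval (Complex.exp (θ * I)) = (r:ℂ) * Complex.exp ((N:ℂ) * θ * I)) →
    ∃ q : Polynomial ℂ, q.natDegree ≤ N ∧ L = q * reflect N (q.map (starRingEnd ℂ)) := by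
  intro n
  induction n using Nat.strong_induction_on with
  | _ n ih =>
  intro N L hn hdeg hpos
  by_cases hL0 : L = 0
  · exact ⟨0, by simp, by simp [hL0]⟩
  rcases Nat.eq_zero_or_pos N with hN | hN
  · subst hN
    have hc : L = C (L.coeff 0) := Polynomial.eq_C_of_natDegree_le_zero (by simpa using hdeg)
    obtain ⟨r, hr0, hrval⟩ := hpos 0
    have hcr : L.coeff 0 = (r : ℂ) := by
      rw [hc] at hrval
      simpa using hrval
    refine ⟨C ((Real.sqrt r : ℝ) : ℂ), by simp, ?_⟩
    rw [Polynomial.map_C, reflect_C]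
    rw [pow_zero, mul_one]
    rw [← C_mul]
    rw [hc, hcr]
    congr 1
    rw [Complex.conj_ofReal, ← Complex.ofReal_mul, Real.mul_self_sqrt hr0]
  obtain ⟨N', rfl⟩ : ∃ N', N = N' + 1 := ⟨N - 1, by omega⟩
  have hSI : L = reflect (2 * (N' + 1)) (L.map (starRingEnd ℂ)) :=
    self_inversive hdeg (fun θ => (hpos θ).imp (fun r h => h.2))
  have htop : L.coeff (2 * (N' + 1)) = (starRingEnd ℂ) (L.coeff 0) := by
    conv_lhs => rw [hSI]
    rw [coeff_reflect, revAt_le (le_refl _), Nat.sub_self, coeff_map]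
  by_cases h00 : L.coeff 0 = 0
  · -- branch (a): divide by X
    have h2N0 : L.coeff (2 * (N' + 1)) = 0 := by rw [htop, h00, _root_.map_zero]
    have hne : L.natDegree ≠ 2 * (N' + 1) := by
      intro h
      exact (Polynomial.leadingCoeff_ne_zero.mpr hL0) (by rw [Polynomial.leadingCoeff, h]; exact h2N0)
    have hnd0 : L.natDegree ≠ 0 := by
      intro h
      exact hL0 (by rw [Polynomial.eq_C_of_natDegree_le_zero h.le, h00, _root_.map_zero])
    set M := L.divX with hMdef
    have hXM : X * M = L := by
      have h4 := X_mul_divX_add L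
      rwa [h00, _root_.map_zero, add_zero] at h4
    have hMnd : M.natDegree = L.natDegree - 1 := Polynomial.natDegree_divX_eq_natDegree_tsub_one
    have hMdeg2 : M.natDegree ≤ 2 * N' := by omega
    have hMn : M.natDegree < n := by omega
    have hMpos : ∀ θ : ℝ, ∃ r : ℝ, 0 ≤ r ∧
        M.eval (Complex.exp (θ * I)) = (r:ℂ) * Complex.exp ((N':ℂ) * θ * I) := by
      intro θ
      obtain ⟨r, hr0, hv'⟩ := hpos θ
      refine ⟨r, hr0, ?_⟩
      have hz : Complex.exp ((θ:ℝ) * I) ≠ 0 := Complex.exp_ne_zero _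
      have hLM : L.eval (Complex.exp ((θ:ℝ) * I)) =
          Complex.exp ((θ:ℝ) * I) * M.eval (Complex.exp ((θ:ℝ) * I)) := by
        rw [← hXM]; simp
      rw [hLM] at hv'
      have hsplit : Complex.exp (((N' + 1 : ℕ):ℂ) * θ * I) =
          Complex.exp ((θ:ℝ) * I) * Complex.exp ((N':ℂ) * θ * I) := by
        rw [← Complex.exp_add]; push_cast; ring_nf
      rw [hsplit] at hv'
      apply mul_left_cancel₀ hz
      rw [hv']; ring
    obtain ⟨q, hq, hfac⟩ := ih M.natDegree hMn N' M le_rfl hMdeg2 hMpos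
    refine ⟨X * q, ?_, ?_⟩
    · have h5 := natDegree_mul_le (p := (X : Polynomial ℂ)) (q := q)
      rw [natDegree_X] at h5
      omega
    · have hmapQ : (X * q).map (starRingEnd ℂ) = X * q.map (starRingEnd ℂ) := by
        simp
      have hrefl : reflect (N' + 1) (X * q.map (starRingEnd ℂ)) =
          reflect 1 (X : Polynomial ℂ) * reflect N' (q.map (starRingEnd ℂ)) := by
        rw [show N' + 1 = 1 + N' by ring]
        exact reflect_mul _ _ (by rw [natDegree_X]) ((natDegree_map_le).trans hq)
      rw [hmapQ, hrefl, reflect_one_X, one_mul, ← hXM, hfac]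
      ring
  · -- branch (b)
    have htopne : L.coeff (2 * (N' + 1)) ≠ 0 := by
      rw [htop]; simpa using h00
    have hdegeq : L.natDegree = 2 * (N' + 1) := le_antisymm hdeg (le_natDegree_of_ne_zero htopne)
    have hdegpos : 0 < L.degree := by
      rw [Polynomial.degree_eq_natDegree hL0]
      exact_mod_cast (by omega : 0 < L.natDegree)
    obtain ⟨w, hw⟩ := Complex.exists_root hdegpos
    have hw0 : w ≠ 0 := by
      intro h
      rw [h, IsRoot, ← coeff_zero_eq_eval_zero] at hw
      exact h00 hw
    have hcw : (starRingEnd ℂ) w ≠ 0 := by simpa using hw0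
    set v : ℂ := ((starRingEnd ℂ) w)⁻¹ with hv
    have hv0 : v ≠ 0 := inv_ne_zero hcw
    have hdvd : (X - C w) * (X - C v) ∣ L := by
      by_cases hvw : v = w
      · have h1 : w * (starRingEnd ℂ) w = 1 := by
          rw [hv] at hvw
          field_simp at hvw
          linear_combination -hvw
        have habs : ‖w‖ = 1 := by
          have h2 : Complex.normSq w = 1 := by
            have := Complex.mul_conj w
            rw [h1] at this
            exact_mod_cast this.symm
          rw [← Complex.sq_norm] at h2
          nlinarith [norm_nonneg w]
        have hw' : Complex.exp ((Complex.arg w : ℝ) * I) = w := by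
          have h3 := Complex.norm_mul_exp_arg_mul_I w
          rw [habs] at h3
          simpa using h3
        have hder := deriv_zero_of_circle_root hpos (θ₀ := Complex.arg w) (by rw [hw']; exact hw)
        rw [hw'] at hder
        rw [hvw]
        exact sq_dvd_of_root_of_deriv hw hder
      · obtain ⟨K, hK⟩ := dvd_iff_isRoot.mpr hw
        have hLv : L.eval v = 0 := by
          conv_lhs => rw [hSI]
          rw [eval_reflect _ _ ((natDegree_map_le).trans hdeg) hv0, eval_map_conj]
          have h6 : (starRingEnd ℂ) v⁻¹ = w := by
            rw [hv, inv_inv]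
            simp
          rw [h6, hw.eq_zero]
          simp
        have hKv : K.eval v = 0 := by
          have h7 := congrArg (eval v) hK
          rw [hLv] at h7
          rw [eval_mul, eval_sub, eval_X, eval_C] at h7
          rcases mul_eq_zero.mp h7.symm with h | h
          · exact absurd (by linear_combination h : v = w) hvw
          · exact h
        obtain ⟨K₂, hK₂⟩ := dvd_iff_isRoot.mpr hKv
        exact ⟨K₂, by rw [hK, hK₂]; ring⟩
    obtain ⟨M, hM⟩ := hdvd
    have hF0 : ((X : Polynomial ℂ) - C w) * (X - C v) ≠ 0 :=
      mul_ne_zero (X_sub_C_ne_zero w) (X_sub_C_ne_zero v)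
    have hM0 : M ≠ 0 := by
      rintro rfl
      rw [mul_zero] at hM
      exact hL0 hM
    have hdegF : (((X : Polynomial ℂ) - C w) * (X - C v)).natDegree = 2 := by
      rw [natDegree_mul (X_sub_C_ne_zero w) (X_sub_C_ne_zero v), natDegree_X_sub_C, natDegree_X_sub_C]
    have hdegM : L.natDegree = 2 + M.natDegree := by
      rw [hM, natDegree_mul hF0 hM0, hdegF]
    set μ : ℂ := -v with hμ
    have hμ0 : μ ≠ 0 := by simp [hμ, hv0]
    -- positivity of C μ * M on the circle (at points away from w)
    have hMceq : ∀ θ : ℝ, Complex.exp (θ * I) ≠ w →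
        ∃ r : ℝ, 0 ≤ r ∧ (C μ * M).eval (Complex.exp (θ * I)) = (r:ℂ) * Complex.exp ((N':ℂ) * θ * I) := by
      intro θ hzw
      obtain ⟨r, hr0, hv'⟩ := hpos θ
      set z := Complex.exp ((θ:ℝ) * I) with hz
      have hz0 : z ≠ 0 := Complex.exp_ne_zero _
      have hzc : z * (starRingEnd ℂ) z = 1 := by
        rw [hz, ← Complex.exp_conj, ← Complex.exp_add]
        have : (θ:ℂ) * I + (starRingEnd ℂ) ((θ:ℂ) * I) = 0 := by
          rw [_root_.map_mul, Complex.conj_ofReal, Complex.conj_I]; ring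
        rw [this, Complex.exp_zero]
      have hs : ((Complex.normSq (z - w) : ℝ) : ℂ) = (z - w) * ((starRingEnd ℂ) z - (starRingEnd ℂ) w) := by
        rw [← _root_.map_sub]
        exact (Complex.mul_conj _).symm
      have hwv : (starRingEnd ℂ) w * v = 1 := by rw [hv]; exact mul_inv_cancel₀ hcw
      have hFz : (z - w) * (z - v) = z * μ * ((Complex.normSq (z - w) : ℝ) : ℂ) := by
        rw [hμ]
        linear_combination (z * v) * hs + ((z - w) * v) * hzc - ((z - w) * z) * hwv
      have hsne : Complex.normSq (z - w) ≠ 0 := by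
        simpa [Complex.normSq_eq_zero, sub_eq_zero] using hzw
      have hsC : ((Complex.normSq (z - w) : ℝ) : ℂ) ≠ 0 := by exact_mod_cast hsne
      refine ⟨r / Complex.normSq (z - w), div_nonneg hr0 (Complex.normSq_nonneg _), ?_⟩
      rw [hM] at hv'
      rw [eval_mul, eval_mul, eval_sub, eval_sub, eval_X, eval_C, eval_C] at hv'
      rw [hFz] at hv'
      have hsplit : Complex.exp (((N' + 1 : ℕ):ℂ) * θ * I) =
          z * Complex.exp ((N':ℂ) * θ * I) := by
        rw [hz, ← Complex.exp_add]; push_cast; ring_nf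
      rw [hsplit] at hv'
      rw [eval_mul, eval_C]
      apply mul_left_cancel₀ (mul_ne_zero hz0 hsC)
      rw [Complex.ofReal_div]
      have hss : ((Complex.normSq (z - w) : ℝ) : ℂ) * ((Complex.normSq (z - w) : ℝ) : ℂ)⁻¹ = 1 :=
        mul_inv_cancel₀ hsC
      linear_combination hv' - (z * (r:ℂ) * Complex.exp ((N':ℂ) * θ * I)) * hss
    -- extension to all θ by continuity
    set ρ : ℝ → ℂ := fun θ =>
      (C μ * M).eval (Complex.exp (θ * I)) * Complex.exp ((θ:ℂ) * (-(N':ℂ) * I)) with hρdef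
    have hρcont : Continuous ρ := by
      apply Continuous.mul
      · exact (Polynomial.continuous _).comp
          (Complex.continuous_exp.comp ((Complex.continuous_ofReal).mul continuous_const))
      · exact Complex.continuous_exp.comp ((Complex.continuous_ofReal).mul continuous_const)
    have hρgood : ∀ θ : ℝ, Complex.exp (θ * I) ≠ w → 0 ≤ (ρ θ).re ∧ (ρ θ).im = 0 := by
      intro θ hzw
      obtain ⟨r, hr0, hval⟩ := hMceq θ hzw
      have : ρ θ = (r : ℂ) := by
        rw [hρdef]
        simp only
        rw [hval, mul_assoc, ← Complex.exp_add,
          show (N':ℂ) * θ * I + (θ:ℂ) * (-(N':ℂ) * I) = 0 by ring, Complex.exp_zero, mul_one]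
      rw [this]
      simpa using hr0
    have hρall : ∀ θ : ℝ, 0 ≤ (ρ θ).re ∧ (ρ θ).im = 0 := by
      intro θ
      by_cases hzw : Complex.exp (θ * I) = w
      · have hseq : Filter.Tendsto (fun m : ℕ => θ + 1/(m+1)) Filter.atTop (nhds θ) := by
          have h8 := tendsto_one_div_add_atTop_nhds_zero_nat (𝕜 := ℝ)
          simpa using tendsto_const_nhds.add h8
        have hρs : Filter.Tendsto (fun m : ℕ => ρ (θ + 1/(m+1))) Filter.atTop (nhds (ρ θ)) :=
          (hρcont.tendsto θ).comp hseq
        have hgoodm : ∀ m : ℕ, Complex.exp (((θ + 1/(m+1) : ℝ)) * I) ≠ w := by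
          intro m h
          have hne := exp_ne_of_small (θ := θ) (a := 1/(m+1))
            (by positivity) (by rw [div_le_one (by positivity)]; linarith [Nat.cast_nonneg (α := ℝ) m])
          rw [h, hzw] at hne
          exact hne rfl
        have hrets := fun m : ℕ => hρgood _ (hgoodm m)
        constructor
        · have hret : Filter.Tendsto (fun m : ℕ => (ρ (θ + 1/(m+1))).re) Filter.atTop
              (nhds ((ρ θ).re)) := (Complex.continuous_re.tendsto _).comp hρs
          exact le_of_tendsto_of_tendsto' tendsto_const_nhds hret (fun m => (hrets m).1)
        · have hiet : Filter.Tendsto (fun m : ℕ => (ρ (θ + 1/(m+1))).im) Filter.atTop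
              (nhds ((ρ θ).im)) := (Complex.continuous_im.tendsto _).comp hρs
          have hiet0 : Filter.Tendsto (fun m : ℕ => (ρ (θ + 1/(m+1))).im) Filter.atTop
              (nhds 0) := by
            have : (fun m : ℕ => (ρ (θ + 1/(m+1))).im) = fun _ => (0:ℝ) := by
              funext m; exact (hrets m).2
            rw [this]
            exact tendsto_const_nhds
          exact tendsto_nhds_unique hiet hiet0
      · exact hρgood θ hzw
    have hpos' : ∀ θ : ℝ, ∃ r : ℝ, 0 ≤ r ∧
        (C μ * M).eval (Complex.exp (θ * I)) = (r:ℂ) * Complex.exp ((N':ℂ) * θ * I) := by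
      intro θ
      obtain ⟨h1, h2⟩ := hρall θ
      refine ⟨(ρ θ).re, h1, ?_⟩
      have hρval : ((ρ θ).re : ℂ) = ρ θ := by
        apply Complex.ext <;> simp [h2]
      have h9 : (C μ * M).eval (Complex.exp (θ * I)) = ρ θ * Complex.exp ((N':ℂ) * θ * I) := by
        rw [hρdef]
        simp only
        rw [mul_assoc, ← Complex.exp_add,
          show (θ:ℂ) * (-(N':ℂ) * I) + (N':ℂ) * θ * I = 0 by ring, Complex.exp_zero, mul_one]
      rw [h9, hρval]
    have hCMdeg : (C μ * M).natDegree ≤ 2 * N' := by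
      have := natDegree_C_mul_le μ M
      omega
    have hCMn : (C μ * M).natDegree < n := by
      have := natDegree_C_mul_le μ M
      omega
    obtain ⟨q, hq, hfac⟩ := ih ((C μ * M).natDegree) hCMn N' (C μ * M) le_rfl hCMdeg hpos'
    refine ⟨(X - C w) * q, ?_, ?_⟩
    · have h5 := natDegree_mul_le (p := (X : Polynomial ℂ) - C w) (q := q)
      rw [natDegree_X_sub_C] at h5
      omega
    · have hmapQ : ((X - C w) * q).map (starRingEnd ℂ) =
          (X - C ((starRingEnd ℂ) w)) * q.map (starRingEnd ℂ) := by
        simp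
      have hrefl : reflect (N' + 1) ((X - C ((starRingEnd ℂ) w)) * q.map (starRingEnd ℂ)) =
          reflect 1 (X - C ((starRingEnd ℂ) w)) * reflect N' (q.map (starRingEnd ℂ)) := by
        rw [show N' + 1 = 1 + N' by ring]
        exact reflect_mul _ _ (by rw [natDegree_X_sub_C]) ((natDegree_map_le).trans hq)
      have hvc : (C ((starRingEnd ℂ) w) : Polynomial ℂ) * C v = 1 := by
        rw [← C_mul, hv, mul_inv_cancel₀ hcw, C_1]
      have hlin : reflect 1 ((X : Polynomial ℂ) - C ((starRingEnd ℂ) w)) =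
          (- C ((starRingEnd ℂ) w)) * (X - C v) := by
        rw [reflect_one_linear]
        linear_combination -hvc
      have hc1 : (- C ((starRingEnd ℂ) w)) * C μ = (1 : Polynomial ℂ) := by
        rw [hμ, C_neg, neg_mul_neg]
        exact hvc
      rw [hmapQ, hrefl, hlin, hM]
      linear_combination (-(C ((starRingEnd ℂ) w)) * (X - C w) * (X - C v)) * hfac +
        (-((X - C w) * (X - C v) * M)) * hc1


end FR4

open Polynomial

/-- Every `P ∈ R_J` (a real trigonometric polynomial of degree at most `2J` with values in
`[0,1]`; here `N = 2J`) can be written as `P(θ) = ⟨ψ| U_θ† E₊ U_θ |ψ⟩` for a positive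
semidefinite matrix `E₊` on `ℂ^{2J+1}`, which moreover can be chosen of rank one,
`E₊ = (2J+1) |b⟩⟨b|`. -/
theorem stmt17 (N : ℕ) (P : ℝ → ℝ) (hP : IsTrigPolyDeg N P)
    (hb : ∀ θ : ℝ, P θ ∈ Set.Icc (0 : ℝ) 1) :
    ∃ Ep : Matrix (Fin (N + 1)) (Fin (N + 1)) ℂ, Ep.PosSemidef ∧
      (∃ b : Fin (N + 1) → ℂ, Ep = ((N : ℂ) + 1) • Matrix.vecMulVec b (star b)) ∧
      ∀ θ : ℝ, (P θ : ℂ) =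
        dotProduct (star (Matrix.mulVec (Urot N θ) (psiUnif N)))
          (Matrix.mulVec Ep (Matrix.mulVec (Urot N θ) (psiUnif N))) := by
  obtain ⟨a, c, hac⟩ := hP
  set L : Polynomial ℂ := C ((a 0 : ℝ) : ℂ) * X ^ N + ∑ k ∈ Finset.Icc 1 N,
      (C ((((a k : ℝ) : ℂ) + ((c k : ℝ) : ℂ) * Complex.I) / 2) * X ^ (N - k) +
        C ((((a k : ℝ) : ℂ) - ((c k : ℝ) : ℂ) * Complex.I) / 2) * X ^ (N + k)) with hLdef
  have hLdeg : L.natDegree ≤ 2 * N := by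
    refine (natDegree_add_le _ _).trans (max_le ?_ ?_)
    · exact (natDegree_C_mul_le _ _).trans (by rw [natDegree_X_pow]; omega)
    · apply Polynomial.natDegree_sum_le_of_forall_le
      intro k hk
      have hkN : k ≤ N := (Finset.mem_Icc.mp hk).2
      refine (natDegree_add_le _ _).trans (max_le ?_ ?_)
      · exact (natDegree_C_mul_le _ _).trans (by rw [natDegree_X_pow]; omega)
      · exact (natDegree_C_mul_le _ _).trans (by rw [natDegree_X_pow]; omega)
  have hLeval : ∀ θ : ℝ, L.eval (Complex.exp (θ * I)) = ((P θ : ℝ) : ℂ) * Complex.exp ((N:ℂ) * θ * I) := by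
    intro θ
    have hpow : ∀ m : ℕ, (Complex.exp ((θ:ℝ) * I)) ^ m = Complex.exp ((m:ℂ) * θ * I) := by
      intro m
      rw [← Complex.exp_nat_mul]; congr 1; ring
    rw [hLdef]
    rw [eval_add, eval_mul, eval_C, eval_pow, eval_X, eval_finset_sum]
    rw [hac θ]
    push_cast
    rw [add_mul, Finset.sum_mul, hpow]
    congr 1
    apply Finset.sum_congr rfl
    intro k hk
    have hkN : k ≤ N := (Finset.mem_Icc.mp hk).2
    rw [eval_add, eval_mul, eval_C, eval_pow, eval_X, eval_mul, eval_C, eval_pow, eval_X,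
      hpow, hpow]
    have e1 : Complex.exp (((N - k : ℕ):ℂ) * θ * I) =
        Complex.exp ((N:ℂ) * θ * I) * Complex.exp (-(((k:ℝ) * θ : ℝ):ℂ) * I) := by
      rw [← Complex.exp_add]; congr 1; push_cast [hkN]; ring
    have e2 : Complex.exp (((N + k : ℕ):ℂ) * θ * I) =
        Complex.exp ((N:ℂ) * θ * I) * Complex.exp ((((k:ℝ) * θ : ℝ):ℂ) * I) := by
      rw [← Complex.exp_add]; congr 1; push_cast; ring
    rw [e1, e2]
    simp only [Complex.exp_mul_I, Complex.cos_neg, Complex.sin_neg]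
    push_cast
    linear_combination (-(((c k):ℝ):ℂ) * Complex.cos ((N:ℂ) * (θ:ℂ)) * Complex.sin ((k:ℂ) * (θ:ℂ))
      - (((c k):ℝ):ℂ) * Complex.I * Complex.sin ((N:ℂ) * (θ:ℂ)) * Complex.sin ((k:ℂ) * (θ:ℂ))) * Complex.I_sq
  have hLpos : ∀ θ : ℝ, ∃ r : ℝ, 0 ≤ r ∧
      L.eval (Complex.exp (θ * I)) = (r:ℂ) * Complex.exp ((N:ℂ) * θ * I) :=
    fun θ => ⟨P θ, (hb θ).1, hLeval θ⟩
  obtain ⟨q, hq, hfac⟩ := FR4.fejer_riesz L.natDegree N L le_rfl hLdeg hLpos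
  -- key pointwise identity
  have key : ∀ θ : ℝ, ((P θ : ℝ) : ℂ) =
      (starRingEnd ℂ) (q.eval (Complex.exp (θ * I))) * q.eval (Complex.exp (θ * I)) := by
    intro θ
    have hz0 : Complex.exp ((θ:ℝ) * I) ≠ 0 := Complex.exp_ne_zero _
    have h1 := hLeval θ
    rw [hfac, eval_mul, FR4.eval_reflect N _ ((natDegree_map_le).trans hq) hz0,
      FR4.eval_map_conj] at h1
    have hconjzinv : (starRingEnd ℂ) (Complex.exp ((θ:ℝ) * I))⁻¹ = Complex.exp ((θ:ℝ) * I) := by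
      rw [← Complex.exp_neg, ← Complex.exp_conj]
      congr 1
      simp
    rw [hconjzinv] at h1
    have hzN : (Complex.exp ((θ:ℝ) * I)) ^ N = Complex.exp ((N:ℂ) * θ * I) := by
      rw [← Complex.exp_nat_mul]; congr 1; ring
    rw [hzN] at h1
    have hE : Complex.exp ((N:ℂ) * θ * I) ≠ 0 := Complex.exp_ne_zero _
    have h2 : ((starRingEnd ℂ) (q.eval (Complex.exp ((θ:ℝ) * I))) * q.eval (Complex.exp ((θ:ℝ) * I)))
        * Complex.exp ((N:ℂ) * θ * I) = ((P θ : ℝ) : ℂ) * Complex.exp ((N:ℂ) * θ * I) := by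
      linear_combination h1
    exact (mul_right_cancel₀ hE h2).symm
  -- the vector b
  set bv : Fin (N + 1) → ℂ := fun k => (starRingEnd ℂ) (q.coeff (k : ℕ)) with hbv
  set Ep : Matrix (Fin (N + 1)) (Fin (N + 1)) ℂ := ((N : ℂ) + 1) • Matrix.vecMulVec bv (star bv)
    with hEp
  have hEpapply : ∀ i j, Ep i j = ((N:ℂ) + 1) * (bv i * (starRingEnd ℂ) (bv j)) := by
    intro i j
    rw [hEp]
    simp [Matrix.vecMulVec_apply, Pi.star_apply, Complex.star_def]
  have hmulVec : ∀ x : Fin (N+1) → ℂ, ∀ j, (Ep.mulVec x) j =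
      ((N:ℂ) + 1) * bv j * (∑ i, (starRingEnd ℂ) (bv i) * x i) := by
    intro x j
    simp only [Matrix.mulVec, dotProduct]
    rw [Finset.mul_sum]
    apply Finset.sum_congr rfl
    intro i _
    rw [hEpapply]
    ring
  have hdot : ∀ x : Fin (N+1) → ℂ, dotProduct (star x) (Ep.mulVec x) =
      ((N:ℂ) + 1) * (∑ i, (starRingEnd ℂ) (x i) * bv i) * (∑ i, (starRingEnd ℂ) (bv i) * x i) := by
    intro x
    simp only [dotProduct, Pi.star_apply, Complex.star_def, hmulVec]
    have hstep : ∀ j : Fin (N+1), (starRingEnd ℂ) (x j) *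
          ((↑N + 1) * bv j * (∑ i, (starRingEnd ℂ) (bv i) * x i))
        = ((starRingEnd ℂ) (x j) * bv j) * ((↑N + 1) * (∑ i, (starRingEnd ℂ) (bv i) * x i)) :=
      fun j => by ring
    rw [Finset.sum_congr rfl (fun j _ => hstep j), ← Finset.sum_mul]
    ring
  refine ⟨Ep, Matrix.posSemidef_iff_dotProduct_mulVec.mpr ⟨?_, ?_⟩, ⟨bv, rfl⟩, ?_⟩
  · -- Hermitian
    ext i j
    rw [Matrix.conjTranspose_apply, hEpapply, hEpapply, Complex.star_def]
    simp only [_root_.map_mul, _root_.map_add, _root_.map_one, Complex.conj_natCast,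
      Complex.conj_conj]
    ring
  · -- nonneg quadratic form
    intro x
    rw [hdot x]
    have hconjsum : (∑ i, (starRingEnd ℂ) (bv i) * x i) =
        (starRingEnd ℂ) (∑ i, (starRingEnd ℂ) (x i) * bv i) := by
      rw [_root_.map_sum]
      apply Finset.sum_congr rfl
      intro i _
      simp only [_root_.map_mul, Complex.conj_conj]
      try ring
    rw [hconjsum, mul_assoc, Complex.mul_conj]
    rw [show ((N:ℂ) + 1) = (((N:ℝ) + 1 : ℝ) : ℂ) by push_cast; ring, ← Complex.ofReal_mul]
    rw [Complex.zero_le_real]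
    exact mul_nonneg (by positivity) (Complex.normSq_nonneg _)
  · -- the evaluation identity
    intro θ
    set u : Fin (N + 1) → ℂ := Matrix.mulVec (Urot N θ) (psiUnif N) with hu
    have huk : ∀ k : Fin (N + 1), u k =
        Complex.exp (Complex.I * ((((k:ℕ):ℝ) - (N : ℝ) / 2 : ℝ) : ℂ) * (θ : ℂ)) *
          ((1 / Real.sqrt (N + 1) : ℝ) : ℂ) := by
      intro k
      rw [hu]
      simp [Urot, psiUnif, Matrix.mulVec_diagonal]
    have hW : (∑ i, (starRingEnd ℂ) (bv i) * u i) =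
        ((1 / Real.sqrt (N + 1) : ℝ) : ℂ) * Complex.exp (-((N:ℂ) / 2) * θ * I) *
          q.eval (Complex.exp (θ * I)) := by
      have hqe : q.eval (Complex.exp ((θ:ℝ) * I)) =
          ∑ i ∈ Finset.range (N + 1), q.coeff i * (Complex.exp ((θ:ℝ) * I)) ^ i :=
        Polynomial.eval_eq_sum_range' (Nat.lt_succ_of_le hq) _
      rw [hqe, ← Fin.sum_univ_eq_sum_range (fun i => q.coeff i * (Complex.exp ((θ:ℝ) * I)) ^ i) (N+1)]
      rw [Finset.mul_sum]
      apply Finset.sum_congr rfl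
      intro i _
      rw [huk i, hbv]
      simp only [Complex.conj_conj]
      have hzk : (Complex.exp ((θ:ℝ) * I)) ^ (i:ℕ) = Complex.exp (((i:ℕ):ℂ) * θ * I) := by
        rw [← Complex.exp_nat_mul]; congr 1; ring
      have hsplit : Complex.exp (Complex.I * ((((i:ℕ):ℝ) - (N : ℝ) / 2 : ℝ) : ℂ) * (θ : ℂ)) =
          Complex.exp (-((N:ℂ) / 2) * θ * I) * Complex.exp (((i:ℕ):ℂ) * θ * I) := by
        rw [← Complex.exp_add]; congr 1; push_cast; ring
      rw [hzk, hsplit]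
      ring
    have hWconj : (∑ i, (starRingEnd ℂ) (u i) * bv i) =
        (starRingEnd ℂ) (∑ i, (starRingEnd ℂ) (bv i) * u i) := by
      rw [_root_.map_sum]
      apply Finset.sum_congr rfl
      intro i _
      simp only [_root_.map_mul, Complex.conj_conj]
      try ring
    have hEconj : (starRingEnd ℂ) (Complex.exp (-((N:ℂ) / 2) * θ * I)) =
        Complex.exp (((N:ℂ) / 2) * θ * I) := by
      rw [← Complex.exp_conj]
      congr 1
      simp only [_root_.map_mul, _root_.map_neg, map_div₀, Complex.conj_natCast,
        Complex.conj_ofReal, Complex.conj_I, _root_.map_ofNat]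
      ring
    have hEE : Complex.exp (((N:ℂ) / 2) * θ * I) * Complex.exp (-((N:ℂ) / 2) * θ * I) = 1 := by
      rw [← Complex.exp_add]
      rw [show ((N:ℂ) / 2) * θ * I + -((N:ℂ) / 2) * θ * I = 0 by ring]
      exact Complex.exp_zero
    have hpsi : ((N:ℂ) + 1) * (((1 / Real.sqrt (N + 1) : ℝ) : ℂ) * ((1 / Real.sqrt (N + 1) : ℝ) : ℂ)) = 1 := by
      have hs : (1 / Real.sqrt (N + 1)) * (1 / Real.sqrt (N + 1)) = 1 / ((N:ℝ) + 1) := by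
        rw [div_mul_div_comm, one_mul, Real.mul_self_sqrt (by positivity)]
      rw [show ((N:ℂ) + 1) = (((N:ℝ) + 1 : ℝ) : ℂ) by push_cast; ring, ← Complex.ofReal_mul, hs]
      rw [← Complex.ofReal_mul]
      rw [mul_one_div, div_self (by positivity : ((N:ℝ) + 1) ≠ 0)]
      exact Complex.ofReal_one
    rw [hdot u, hWconj, hW, key θ]
    simp only [_root_.map_mul, Complex.conj_ofReal, hEconj]
    linear_combination
      (-((starRingEnd ℂ) (q.eval (Complex.exp (θ * I))) * q.eval (Complex.exp (θ * I)))) * hpsi +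
      (-(((N:ℂ) + 1) * ((1 / Real.sqrt (N + 1) : ℝ) : ℂ) * ((1 / Real.sqrt (N + 1) : ℝ) : ℂ) *
        (starRingEnd ℂ) (q.eval (Complex.exp (θ * I))) * q.eval (Complex.exp (θ * I)))) * hEE
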